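/- Let n ≥ 1 and let θ : F_2^n → ℝ satisfy θ(0) = 0. Then there exists a family of real numbers (α_s)_{s ∈ F_2^n \ {0}} such that the 2^n × 2^n diagonal complex matrix Λ with entries Λ(x,x) = e^{iθ(x)} equals the product over all nonzero s ∈ F_2^n of the diagonal matrices D_s with entries D_s(x,x) = e^{i·α_s·⟨s,x⟩} (the D_s are diagonal and hence pairwise commute, so the product is independent of the order of the factors). -/

import Mathlib

open Matrix

/-- The inner product over `F_2` of two vectors in `F_2^n`, interpreted as the real
number `0` or `1`. -/
def ipR (n : ℕ) (s x : Fin n → ZMod 2) : ℝ := ((∑ i, s i * x i : ZMod 2).val : ℝ)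

section Aux
open Finset

noncomputable def ee (n : ℕ) (s z : Fin n → ZMod 2) : ℝ :=
  (-1) ^ ((∑ i, s i * z i : ZMod 2).val)

lemma neg_one_pow_val_add (a b : ZMod 2) :
    ((-1 : ℝ)) ^ ((a + b).val) = (-1) ^ a.val * (-1) ^ b.val := by
  rw [ZMod.val_add]; fin_cases a <;> fin_cases b <;> simp [ZMod.val]

lemma val_real (a : ZMod 2) : ((a.val : ℝ)) = (1 - (-1) ^ a.val) / 2 := by
  fin_cases a <;> simp [ZMod.val]

lemma ee_mul (n : ℕ) (s x y : Fin n → ZMod 2) :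
    ee n s x * ee n s y = ee n s (x + y) := by
  unfold ee
  rw [show (∑ i, s i * (x + y) i) = (∑ i, s i * x i) + (∑ i, s i * y i) by
    rw [← Finset.sum_add_distrib]; exact Finset.sum_congr rfl fun i _ => by
      simp [Pi.add_apply, mul_add]]
  rw [neg_one_pow_val_add]

lemma pow_val_sum (n : ℕ) (f : Fin n → ZMod 2) (t : Finset (Fin n)) :
    ((-1 : ℝ)) ^ ((∑ i ∈ t, f i).val) = ∏ i ∈ t, (-1 : ℝ) ^ ((f i).val) := by
  classical
  induction t using Finset.cons_induction with
  | empty => simp [show ((0:ZMod 2)).val = 0 from rfl]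
  | cons a t ha ih =>
      rw [Finset.sum_cons, Finset.prod_cons, neg_one_pow_val_add, ih]

lemma ee_eq_prod (n : ℕ) (s z : Fin n → ZMod 2) :
    ee n s z = ∏ i, (-1 : ℝ) ^ ((s i * z i).val) := by
  unfold ee
  exact pow_val_sum n (fun i => s i * z i) Finset.univ

lemma ee_orth (n : ℕ) (z : Fin n → ZMod 2) :
    ∑ s : Fin n → ZMod 2, ee n s z = if z = 0 then (2 : ℝ) ^ n else 0 := by
  classical
  have h1 : ∑ s : Fin n → ZMod 2, ee n s z
      = ∏ i, ∑ a : ZMod 2, (-1 : ℝ) ^ ((a * z i).val) := by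
    rw [Fintype.prod_sum]
    exact Finset.sum_congr rfl fun s _ => ee_eq_prod n s z
  have h2 : ∀ i, ∑ a : ZMod 2, (-1 : ℝ) ^ ((a * z i).val)
      = if z i = 0 then 2 else 0 := by
    intro i
    rcases eq_or_ne (z i) 0 with h | h
    · rw [h]; rw [if_pos rfl]
      rw [show (Finset.univ : Finset (ZMod 2)) = {0, 1} from rfl]
      norm_num [show ((0:ZMod 2)).val = 0 from rfl]
    · rw [if_neg h]
      have hz : z i = 1 := by revert h; generalize z i = a; revert a; decide
      rw [hz]
      rw [show (Finset.univ : Finset (ZMod 2)) = {0, 1} from rfl]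
      norm_num [show ((0:ZMod 2)).val = 0 from rfl, show ((1:ZMod 2)).val = 1 from rfl]
  rw [h1]
  simp only [h2]
  rcases eq_or_ne z 0 with h | h
  · subst h; simp
  · rw [if_neg h]
    obtain ⟨i, hi⟩ : ∃ i, z i ≠ 0 := by
      by_contra hc
      push_neg at hc
      exact h (funext fun i => hc i)
    exact Finset.prod_eq_zero (Finset.mem_univ i) (by rw [if_neg hi])

lemma ipR_eq (n : ℕ) (s x : Fin n → ZMod 2) : ipR n s x = (1 - ee n s x) / 2 :=
  val_real _

lemma ee_zero_left (n : ℕ) (x : Fin n → ZMod 2) : ee n 0 x = 1 := by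
  unfold ee
  simp [show ((0:ZMod 2)).val = 0 from rfl]

lemma scalar_key (n : ℕ) (θ : (Fin n → ZMod 2) → ℝ) (hθ : θ 0 = 0) :
    ∃ α : {s : Fin n → ZMod 2 // s ≠ 0} → ℝ,
      ∀ x, ∑ s : {s : Fin n → ZMod 2 // s ≠ 0}, α s * ipR n s.val x = θ x := by
  classical
  set c : (Fin n → ZMod 2) → ℝ :=
    fun s => ((2:ℝ) ^ n)⁻¹ * ∑ y, θ y * ee n s y with hc
  have hee_mul : ∀ s x y : Fin n → ZMod 2, ee n s y * ee n s x = ee n s (y + x) :=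
    fun s x y => ee_mul n s y x
  have hzadd : ∀ a : ZMod 2, a + a = 0 := by decide
  have hval : ∀ x y : Fin n → ZMod 2, (y + x = 0) ↔ y = x := by
    intro x y
    constructor
    · intro h
      funext i
      have h2 := congrFun h i
      simp only [Pi.add_apply, Pi.zero_apply] at h2
      revert h2; generalize y i = a; generalize x i = b; revert a b; decide
    · intro h; subst h; funext i; exact hzadd (y i)
  have expand : ∀ s x, c s * ee n s x
      = ∑ y, ((2:ℝ)^n)⁻¹ * (θ y * ee n s (y + x)) := by
    intro s x
    calc c s * ee n s x
        = ∑ y, ((2:ℝ)^n)⁻¹ * (θ y * ee n s y) * ee n s x := by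
          simp only [hc]; rw [Finset.mul_sum, Finset.sum_mul]
      _ = ∑ y, ((2:ℝ)^n)⁻¹ * (θ y * ee n s (y + x)) :=
          Finset.sum_congr rfl fun y _ => by rw [mul_assoc, mul_assoc, hee_mul]
  have swap : ∀ x, ∑ s, c s * ee n s x
      = ∑ y, ((2:ℝ)^n)⁻¹ * (θ y * ∑ s, ee n s (y + x)) := by
    intro x
    rw [Finset.sum_congr rfl fun s _ => expand s x, Finset.sum_comm]
    exact Finset.sum_congr rfl fun y _ => by rw [← Finset.mul_sum, ← Finset.mul_sum]
  have full : ∀ x, ∑ s, c s * ee n s x = θ x := by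
    intro x
    rw [swap x]
    rw [Finset.sum_eq_single x]
    · rw [ee_orth, if_pos ((hval x x).mpr rfl)]
      field_simp
    · intro y _ hy
      rw [ee_orth, if_neg (fun h => hy ((hval x y).mp h)), mul_zero, mul_zero]
    · intro h; exact absurd (Finset.mem_univ x) h
  have sum_c : ∑ s, c s = 0 := by
    have h0 : ∀ s, c s = c s * ee n s 0 := fun s => by
      rw [show ee n s 0 = 1 from ?_, mul_one]
      · unfold ee; simp [show ((0:ZMod 2)).val = 0 from rfl]
    rw [Finset.sum_congr rfl fun s _ => h0 s, full 0, hθ]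
  refine ⟨fun s => -2 * c s.val, fun x => ?_⟩
  set F : (Fin n → ZMod 2) → ℝ := fun s => c s * ee n s x - c s with hF
  have hterm : ∀ s : {s : Fin n → ZMod 2 // s ≠ 0},
      (-2 * c s.val) * ipR n s.val x = F s.val := by
    intro s; rw [ipR_eq, hF]; ring
  rw [Finset.sum_congr rfl fun s _ => hterm s]
  have hsub : ∑ s : {s : Fin n → ZMod 2 // s ≠ 0}, F s.val
      = ∑ s ∈ Finset.univ.filter (fun s : Fin n → ZMod 2 => s ≠ 0), F s :=
    (Finset.sum_subtype _ (fun s => by simp) F).symm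
  rw [hsub, Finset.filter_ne', Finset.sum_erase _ (by rw [hF]; simp [ee_zero_left])]
  have : ∑ s, F s = (∑ s, c s * ee n s x) - ∑ s, c s := by
    rw [hF, Finset.sum_sub_distrib]
  rw [this, full, sum_c, sub_zero]

noncomputable def diagHom (n : ℕ) :
    ((Fin n → ZMod 2) → ℂ) →* Matrix (Fin n → ZMod 2) (Fin n → ZMod 2) ℂ where
  toFun := Matrix.diagonal
  map_one' := Matrix.diagonal_one
  map_mul' := fun a b => (Matrix.diagonal_mul_diagonal a b).symm

end Aux

/-- Any `2^n × 2^n` diagonal unitary `Λ` with entries `e^{iθ(x)}` (where `θ(0) = 0`) is the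
product, over all nonzero `s ∈ F_2^n`, of the diagonal matrices `D_s` with entries
`e^{i·α_s·⟨s,x⟩}`, for a suitable choice of reals `(α_s)`.  The `D_s` are diagonal and hence
pairwise commute, so the product (formalized via `Finset.noncommProd`) does not depend on the
order of the factors. -/
theorem diagonal_unitary_eq_prod_phase_factors (n : ℕ) (hn : 1 ≤ n)
    (θ : (Fin n → ZMod 2) → ℝ) (hθ : θ 0 = 0) :
    ∃ α : {s : Fin n → ZMod 2 // s ≠ 0} → ℝ,
      (Matrix.diagonal fun x : Fin n → ZMod 2 => Complex.exp ((θ x : ℂ) * Complex.I)) =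
        Finset.univ.noncommProd
          (fun s : {s : Fin n → ZMod 2 // s ≠ 0} =>
            Matrix.diagonal fun x : Fin n → ZMod 2 =>
              Complex.exp (((α s * ipR n s.val x : ℝ) : ℂ) * Complex.I))
          (fun a _ b _ _ => by
            show Matrix.diagonal _ * Matrix.diagonal _ = Matrix.diagonal _ * Matrix.diagonal _
            rw [Matrix.diagonal_mul_diagonal, Matrix.diagonal_mul_diagonal]
            exact congrArg _ (funext fun i => mul_comm _ _)) := by
    classical
  obtain ⟨α, hα⟩ := scalar_key n θ hθ
  refine ⟨α, ?_⟩
  set g : {s : Fin n → ZMod 2 // s ≠ 0} → ((Fin n → ZMod 2) → ℂ) :=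
    fun s x => Complex.exp (((α s * ipR n s.val x : ℝ) : ℂ) * Complex.I) with hg
  have comm : (↑(Finset.univ : Finset {s : Fin n → ZMod 2 // s ≠ 0}) : Set {s : Fin n → ZMod 2 // s ≠ 0}).Pairwise
      fun a b => Commute (g a) (g b) := fun a _ b _ _ => mul_comm _ _
  have h1 : (diagHom n) (Finset.univ.noncommProd g comm)
      = Finset.univ.noncommProd (fun s => (diagHom n) (g s))
        (fun a ha b hb hab => ((comm.of_refl ha hb).map (diagHom n))) :=
    Finset.map_noncommProd _ _ _ _
  have h2 : Finset.univ.noncommProd g comm = ∏ s, g s :=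
    Finset.noncommProd_eq_prod _ _
  have h3 : (Matrix.diagonal fun x : Fin n → ZMod 2 =>
      Complex.exp ((θ x : ℂ) * Complex.I)) = (diagHom n) (∏ s, g s) := by
    show _ = Matrix.diagonal (∏ s, g s)
    refine congrArg Matrix.diagonal (funext fun x => ?_)
    rw [Finset.prod_apply]
    rw [hg]
    rw [← Complex.exp_sum]
    congr 1
    rw [← Finset.sum_mul, ← Complex.ofReal_sum, hα x]
  rw [h3, ← h2, h1]
  exact Finset.noncommProd_congr rfl (fun s _ => rfl) _
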